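/- arXiv:2412.12461 — 6 statements merged into one kernel-verified Lean document; each statement's English description precedes it below -/
import Mathlib

section
/- Let q, p : ℤ × ℝ → ℂ be differentiable in t, and let f : ℤ × ℝ → ℂ be differentiable in t with f(n,t)² = 1 − q(n,t)p(n,t) and f(n,t) ≠ 0 for all n, t. Then the zero-curvature equation ∂L/∂t(n,t,z) = M(n+1,t,z)·L(n,t,z) − L(n,t,z)·M(n,t,z) holds for all n ∈ ℤ, t ∈ ℝ and all z ∈ ℂ \ {0} if and only if q and p satisfy the Ablowitz–Ladik system: i·q_t(n,t) + q(n+1,t) − 2q(n,t) + q(n−1,t) − p(n,t)q(n,t)(q(n+1,t) + q(n−1,t)) = 0 and i·p_t(n,t) − p(n+1,t) + 2p(n,t) − p(n−1,t) + p(n,t)q(n,t)(p(n+1,t) + p(n−1,t)) = 0 for all n, t. -/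
set_option maxHeartbeats 1000000


/- STATEMENT 0: The zero-curvature equation for the Ablowitz–Ladik Lax pair is
equivalent to the Ablowitz–Ladik system. -/

attribute [local instance] Matrix.normedAddCommGroup Matrix.normedSpace

/-- The Ablowitz–Ladik space-part Lax matrix
`L(n,t,z) = (1/f(n,t)) · [[z, q(n,t)], [p(n,t), z⁻¹]]`. -/
noncomputable def ALlaxL (q p f : ℤ × ℝ → ℂ) (n : ℤ) (t : ℝ) (z : ℂ) :
    Matrix (Fin 2) (Fin 2) ℂ :=
  (f (n, t))⁻¹ • !![z, q (n, t); p (n, t), z⁻¹]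

/-- The Ablowitz–Ladik time-part Lax matrix
`M(n,t,z) = i·ω(z)·σ₃ + P(n,t,z)` with `ω(z) = (1/2)(z − z⁻¹)²`. -/
noncomputable def ALlaxM (q p : ℤ × ℝ → ℂ) (n : ℤ) (t : ℝ) (z : ℂ) :
    Matrix (Fin 2) (Fin 2) ℂ :=
  (Complex.I * ((1/2) * (z - z⁻¹)^2)) • (!![1, 0; 0, -1] : Matrix (Fin 2) (Fin 2) ℂ) +
  Complex.I •
    !![-(1/2) * (q (n, t) * p (n - 1, t) + p (n, t) * q (n - 1, t)),
        z * q (n, t) - z⁻¹ * q (n - 1, t);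
        z * p (n - 1, t) - z⁻¹ * p (n, t),
        (1/2) * (q (n, t) * p (n - 1, t) + p (n, t) * q (n - 1, t))]

lemma hasDerivAt_ALlaxL (q p f qt pt ft : ℤ × ℝ → ℂ)
    (hq : ∀ (n : ℤ) (t : ℝ), HasDerivAt (fun s => q (n, s)) (qt (n, t)) t)
    (hp : ∀ (n : ℤ) (t : ℝ), HasDerivAt (fun s => p (n, s)) (pt (n, t)) t)
    (hf : ∀ (n : ℤ) (t : ℝ), HasDerivAt (fun s => f (n, s)) (ft (n, t)) t)
    (hfne : ∀ (n : ℤ) (t : ℝ), f (n, t) ≠ 0) (n : ℤ) (t : ℝ) (z : ℂ) :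
    HasDerivAt (fun s => ALlaxL q p f n s z)
      ((f (n,t))⁻¹ • !![0, qt (n,t); pt (n,t), 0]
        + (-(ft (n,t)) / f (n,t) ^ 2) • !![z, q (n,t); p (n,t), z⁻¹]) t := by
  have hA : ∀ s : ℝ, !![z, q (n,s); p (n,s), z⁻¹]
      = !![z,0;(0:ℂ),z⁻¹] + q (n,s) • !![0,1;(0:ℂ),0] + p (n,s) • !![0,0;(1:ℂ),0] := by
    intro s; ext i j; fin_cases i <;> fin_cases j <;> simp
  have hinner : HasDerivAt
      (fun s => !![z,0;(0:ℂ),z⁻¹] + q (n,s) • !![0,1;(0:ℂ),0] + p (n,s) • !![0,0;(1:ℂ),0])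
      (0 + qt (n,t) • !![0,1;(0:ℂ),0] + pt (n,t) • !![0,0;(1:ℂ),0]) t :=
    ((hasDerivAt_const t _).add ((hq n t).smul_const _)).add ((hp n t).smul_const _)
  have hfi : HasDerivAt (fun s => (f (n,s))⁻¹)
      ((0 * f (n,t) - 1 * ft (n,t)) / f (n,t) ^ 2) t := by
    have := (hasDerivAt_const t (1:ℂ)).fun_div (hf n t) (hfne n t)
    simpa only [one_div] using this
  have h2 := hfi.fun_smul hinner
  simp only [← hA] at h2
  have he : (fun s => ALlaxL q p f n s z) = fun s => (f (n,s))⁻¹ • !![z, q (n,s); p (n,s), z⁻¹] := rfl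
  rw [he]
  convert h2 using 1
  · rfl
  · rfl
  · rfl
  ext i j
  fin_cases i <;> fin_cases j <;> simp

theorem al_zero_curvature_iff_AL_system
    (q p f qt pt ft : ℤ × ℝ → ℂ)
    (hq : ∀ (n : ℤ) (t : ℝ), HasDerivAt (fun s => q (n, s)) (qt (n, t)) t)
    (hp : ∀ (n : ℤ) (t : ℝ), HasDerivAt (fun s => p (n, s)) (pt (n, t)) t)
    (hf : ∀ (n : ℤ) (t : ℝ), HasDerivAt (fun s => f (n, s)) (ft (n, t)) t)
    (hf2 : ∀ (n : ℤ) (t : ℝ), (f (n, t))^2 = 1 - q (n, t) * p (n, t))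
    (hfne : ∀ (n : ℤ) (t : ℝ), f (n, t) ≠ 0) :
    (∀ (n : ℤ) (t : ℝ) (z : ℂ), z ≠ 0 →
      HasDerivAt (fun s => ALlaxL q p f n s z)
        (ALlaxM q p (n + 1) t z * ALlaxL q p f n t z
          - ALlaxL q p f n t z * ALlaxM q p n t z) t)
    ↔
    (∀ (n : ℤ) (t : ℝ),
      Complex.I * qt (n, t) + q (n + 1, t) - 2 * q (n, t) + q (n - 1, t)
        - p (n, t) * q (n, t) * (q (n + 1, t) + q (n - 1, t)) = 0 ∧
      Complex.I * pt (n, t) - p (n + 1, t) + 2 * p (n, t) - p (n - 1, t)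
        + p (n, t) * q (n, t) * (p (n + 1, t) + p (n - 1, t)) = 0) := by
  have key := hasDerivAt_ALlaxL q p f qt pt ft hq hp hf hfne
  have hft : ∀ (n : ℤ) (t : ℝ), ft (n,t) * f (n,t) + f (n,t) * ft (n,t)
      = 0 - (qt (n,t) * p (n,t) + q (n,t) * pt (n,t)) := by
    intro n t
    have h1 := (hf n t).fun_mul (hf n t)
    have heq : (fun s => f (n,s) * f (n,s)) = fun s => 1 - q (n,s) * p (n,s) := by
      funext s; rw [← pow_two]; exact hf2 n s
    rw [heq] at h1
    exact h1.unique ((hasDerivAt_const t (1:ℂ)).sub ((hq n t).mul (hp n t)))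
  constructor
  · intro H n t
    have hmat := (H n t 1 one_ne_zero).unique (key n t 1)
    have e := Matrix.ext_iff.mpr hmat
    have e00 := e 0 0
    have e01 := e 0 1
    have e10 := e 1 0
    simp only [ALlaxL, ALlaxM, Matrix.sub_apply, Matrix.add_apply, Matrix.smul_apply,
      Matrix.mul_apply, Fin.sum_univ_two, Matrix.cons_val', Matrix.cons_val_zero,
      Matrix.cons_val_one, Matrix.head_cons, Matrix.head_fin_const, Matrix.empty_val',
      Matrix.cons_val_fin_one, Matrix.of_apply, smul_eq_mul, add_sub_cancel_right] at e00 e01 e10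
    have hfn := hfne n t
    field_simp at e00 e01 e10
    have h4 : (4 : ℂ) * f (n,t) ^ 6 ≠ 0 := mul_ne_zero (by norm_num) (pow_ne_zero _ hfn)
    constructor
    · have g1 : (4 : ℂ) * f (n,t) ^ 6 * (Complex.I * qt (n, t) + q (n + 1, t) - 2 * q (n, t)
          + q (n - 1, t) - p (n, t) * q (n, t) * (q (n + 1, t) + q (n - 1, t))) = 0 := by
        linear_combination (2 * f (n,t)^5) * ((-Complex.I) * e01 + (Complex.I * q (n,t)) * e00
          + (2 * f (n,t) * (q (n+1,t) - 2*q (n,t) + q (n-1,t)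
              - p (n,t)*q (n,t)*(q (n+1,t) + q (n-1,t)))) * Complex.I_sq)
      exact (mul_eq_zero.mp g1).resolve_left h4
    · have g2 : (4 : ℂ) * f (n,t) ^ 6 * (Complex.I * pt (n, t) - p (n + 1, t) + 2 * p (n, t)
          - p (n - 1, t) + p (n, t) * q (n, t) * (p (n + 1, t) + p (n - 1, t))) = 0 := by
        linear_combination (2 * f (n,t)^5) * ((-Complex.I) * e10 + (Complex.I * p (n,t)) * e00
          + (2 * f (n,t) * (-(p (n+1,t) - 2*p (n,t) + p (n-1,t))
              + p (n,t)*q (n,t)*(p (n+1,t) + p (n-1,t)))) * Complex.I_sq)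
      exact (mul_eq_zero.mp g2).resolve_left h4
  · intro H n t z hz
    obtain ⟨h1, h2⟩ := H n t
    have hfn := hfne n t
    have hRF : f (n,t) * (f (n,t))⁻¹ = 1 := mul_inv_cancel₀ hfn
    have hRZ : z * z⁻¹ = 1 := mul_inv_cancel₀ hz
    have qt_eq : qt (n,t) = Complex.I * (q (n+1,t) - 2*q (n,t) + q (n-1,t)
        - p (n,t)*q (n,t)*(q (n+1,t) + q (n-1,t))) := by
      linear_combination (-Complex.I) * h1 + qt (n,t) * Complex.I_sq
    have pt_eq : pt (n,t) = -Complex.I * (p (n+1,t) - 2*p (n,t) + p (n-1,t)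
        - p (n,t)*q (n,t)*(p (n+1,t) + p (n-1,t))) := by
      linear_combination (-Complex.I) * h2 + pt (n,t) * Complex.I_sq
    have ft0 : f (n,t) * (ft (n,t) + (Complex.I/2) * f (n,t)
        * (p (n,t)*(q (n+1,t) + q (n-1,t)) - q (n,t)*(p (n+1,t) + p (n-1,t)))) = 0 := by
      linear_combination ((1/2)) * (hft n t) + ((-1/2)*p (n, t)) * (qt_eq) + ((-1/2)*q (n, t)) * (pt_eq) + ((1/2)*q (n - 1, t)*p (n, t)*Complex.I + (1/2)*q (n + 1, t)*p (n, t)*Complex.I + (-1/2)*q (n, t)*p (n - 1, t)*Complex.I + (-1/2)*q (n, t)*p (n + 1, t)*Complex.I) * (hf2 n t)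
    have ft_eq : ft (n,t) = -(Complex.I/2) * f (n,t)
        * (p (n,t)*(q (n+1,t) + q (n-1,t)) - q (n,t)*(p (n+1,t) + p (n-1,t))) := by
      have := (mul_eq_zero.mp ft0).resolve_left hfn
      linear_combination this
    have hM : ALlaxM q p (n + 1) t z * ALlaxL q p f n t z
          - ALlaxL q p f n t z * ALlaxM q p n t z
        = (f (n,t))⁻¹ • !![0, qt (n,t); pt (n,t), 0]
          + (-(ft (n,t)) / f (n,t) ^ 2) • !![z, q (n,t); p (n,t), z⁻¹] := by
      ext i j
      fin_cases i <;> fin_cases j <;>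
        simp only [ALlaxL, ALlaxM, Matrix.sub_apply, Matrix.add_apply, Matrix.smul_apply,
          Matrix.mul_apply, Fin.sum_univ_two, Fin.mk_zero, Fin.mk_one, Matrix.cons_val',
          Matrix.cons_val_zero, Matrix.cons_val_one, Matrix.head_cons, Matrix.head_fin_const,
          Matrix.empty_val', Matrix.cons_val_fin_one, Matrix.of_apply, smul_eq_mul,
          add_sub_cancel_right]
      · linear_combination (z*(f (n, t))⁻¹ ^ 2) * (ft_eq) + ((-1/2)*q (n - 1, t)*p (n, t)*Complex.I*z*(f (n, t))⁻¹ + (-1/2)*q (n + 1, t)*p (n, t)*Complex.I*z*(f (n, t))⁻¹ + (1/2)*q (n, t)*p (n - 1, t)*Complex.I*z*(f (n, t))⁻¹ + (1/2)*q (n, t)*p (n + 1, t)*Complex.I*z*(f (n, t))⁻¹) * (hRF)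
      · linear_combination (-1*(f (n, t))⁻¹) * (qt_eq) + (q (n, t)*(f (n, t))⁻¹ ^ 2) * (ft_eq) + ((-1/2)*q (n, t)*q (n - 1, t)*p (n, t)*Complex.I*(f (n, t))⁻¹ + (-1/2)*q (n, t)*q (n + 1, t)*p (n, t)*Complex.I*(f (n, t))⁻¹ + (1/2)*q (n, t) ^ 2*p (n - 1, t)*Complex.I*(f (n, t))⁻¹ + (1/2)*q (n, t) ^ 2*p (n + 1, t)*Complex.I*(f (n, t))⁻¹) * (hRF) + (q (n - 1, t)*Complex.I*(f (n, t))⁻¹ + q (n + 1, t)*Complex.I*(f (n, t))⁻¹ + -2*q (n, t)*Complex.I*(f (n, t))⁻¹) * (hRZ)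
      · linear_combination (-1*(f (n, t))⁻¹) * (pt_eq) + (p (n, t)*(f (n, t))⁻¹ ^ 2) * (ft_eq) + ((-1/2)*q (n - 1, t)*p (n, t) ^ 2*Complex.I*(f (n, t))⁻¹ + (-1/2)*q (n + 1, t)*p (n, t) ^ 2*Complex.I*(f (n, t))⁻¹ + (1/2)*q (n, t)*p (n, t)*p (n - 1, t)*Complex.I*(f (n, t))⁻¹ + (1/2)*q (n, t)*p (n, t)*p (n + 1, t)*Complex.I*(f (n, t))⁻¹) * (hRF) + (-1*p (n - 1, t)*Complex.I*(f (n, t))⁻¹ + -1*p (n + 1, t)*Complex.I*(f (n, t))⁻¹ + 2*p (n, t)*Complex.I*(f (n, t))⁻¹) * (hRZ)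
      · linear_combination (z⁻¹*(f (n, t))⁻¹ ^ 2) * (ft_eq) + ((-1/2)*q (n - 1, t)*p (n, t)*Complex.I*z⁻¹*(f (n, t))⁻¹ + (-1/2)*q (n + 1, t)*p (n, t)*Complex.I*z⁻¹*(f (n, t))⁻¹ + (1/2)*q (n, t)*p (n - 1, t)*Complex.I*z⁻¹*(f (n, t))⁻¹ + (1/2)*q (n, t)*p (n + 1, t)*Complex.I*z⁻¹*(f (n, t))⁻¹) * (hRF)
    rw [hM]
    exact key n t z
end

section
/- Let ν ∈ {1, −1}, n₀ ∈ ℤ, q : ℤ → ℂ, and set p(n) = ν·conj(q(n₀ − n)) (the space shifted nonlocal reduction). Let f : ℤ → ℂ satisfy f(n)² = 1 − q(n)p(n), f(n) ≠ 0, and conj(f(n₀ − n)) = f(n) for all n, and let z ∈ ℂ \ {0}. Then L(n,z) · σ̃_ν · conj(L(n₀ − n, conj(z))) = σ̃_ν for all n ∈ ℤ, where conj denotes entrywise complex conjugation. Consequently, if Ψ : ℤ → ℂ² satisfies Ψ(n+1) = L(n, conj(z))·Ψ(n) for all n, then Φ(n) := σ̃_ν · conj(Ψ(n₀ − n + 1))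 satisfies Φ(n+1) = L(n,z)·Φ(n) for all n. -/
/- STATEMENT 5: Symmetry of the Ablowitz–Ladik Lax matrix under the space
shifted nonlocal reduction `p(n) = ν·conj(q(n₀ − n))`:
`L(n,z) · σ̃_ν · conj(L(n₀ − n, conj z)) = σ̃_ν`, and the induced symmetry of
solutions of the discrete linear problem. -/

open Matrix

/-- The Ablowitz–Ladik Lax matrix `L(n,z) = (1/f(n)) · [[z, q(n)], [p(n), z⁻¹]]`. -/
noncomputable def ALlax (q p f : ℤ → ℂ) (z : ℂ) (n : ℤ) :
    Matrix (Fin 2) (Fin 2) ℂ :=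
  (f n)⁻¹ • !![z, q n; p n, z⁻¹]

/-- The matrix `σ̃_ν = [[0,1],[−ν,0]]`. -/
def sigmaTildeNu (ν : ℂ) : Matrix (Fin 2) (Fin 2) ℂ := !![0, 1; -ν, 0]

theorem al_space_shifted_reduction_symmetry (ν : ℂ) (hν : ν = 1 ∨ ν = -1) (n₀ : ℤ)
    (q : ℤ → ℂ) (p : ℤ → ℂ) (hp : ∀ n : ℤ, p n = ν * (starRingEnd ℂ) (q (n₀ - n)))
    (f : ℤ → ℂ)
    (hf2 : ∀ n : ℤ, (f n)^2 = 1 - q n * p n)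
    (hfne : ∀ n : ℤ, f n ≠ 0)
    (hfsym : ∀ n : ℤ, (starRingEnd ℂ) (f (n₀ - n)) = f n)
    (z : ℂ) (hz : z ≠ 0) :
    (∀ n : ℤ,
      ALlax q p f z n * sigmaTildeNu ν
          * (ALlax q p f ((starRingEnd ℂ) z) (n₀ - n)).map (starRingEnd ℂ)
        = sigmaTildeNu ν) ∧
    (∀ Ψ : ℤ → Fin 2 → ℂ,
      (∀ n : ℤ, Ψ (n + 1) = ALlax q p f ((starRingEnd ℂ) z) n *ᵥ Ψ n) →
      (∀ n : ℤ,
        (sigmaTildeNu ν *ᵥ fun i => (starRingEnd ℂ) (Ψ (n₀ - (n + 1) + 1) i))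
          = ALlax q p f z n *ᵥ (sigmaTildeNu ν *ᵥ fun i => (starRingEnd ℂ) (Ψ (n₀ - n + 1) i)))) := by
  have hν2 : ν * ν = 1 := by rcases hν with h | h <;> simp [h]
  have hν2' : ν ^ 2 = 1 := by rw [sq]; exact hν2
  have hνc : (starRingEnd ℂ) ν = ν := by rcases hν with h | h <;> simp [h]
  have hq : ∀ n : ℤ, (starRingEnd ℂ) (q (n₀ - n)) = ν * p n := by
    intro n
    rw [hp n, ← mul_assoc, hν2, one_mul]
  have hpc : ∀ n : ℤ, (starRingEnd ℂ) (p (n₀ - n)) = ν * q n := by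
    intro n
    rw [hp (n₀ - n)]
    simp only [_root_.map_mul, hνc, Complex.conj_conj]
    congr 2
    omega
  have key : ∀ n : ℤ,
      ALlax q p f z n * sigmaTildeNu ν
          * (ALlax q p f ((starRingEnd ℂ) z) (n₀ - n)).map (starRingEnd ℂ)
        = sigmaTildeNu ν := by
    intro n
    have hmap : (ALlax q p f ((starRingEnd ℂ) z) (n₀ - n)).map (starRingEnd ℂ)
        = (f n)⁻¹ • !![z, ν * p n; ν * q n, z⁻¹] := by
      ext i j
      fin_cases i <;> fin_cases j <;>
        simp [ALlax, Matrix.map_apply, hq n, hpc n, hfsym n, map_inv₀, Complex.conj_conj]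
    rw [hmap]
    have hf : f n ≠ 0 := hfne n
    have hfsq := hf2 n
    ext i j
    fin_cases i <;> fin_cases j <;>
      simp [ALlax, sigmaTildeNu, Matrix.mul_apply, Fin.sum_univ_two] <;>
      field_simp
    · ring
    · linear_combination (-(q n * p n)) * hν2' - hfsq
    · linear_combination ν * hfsq
    · linear_combination (-(p n)) * hν2'
  refine ⟨key, ?_⟩
  intro Ψ hΨ n
  have h1 : Ψ (n₀ - n + 1) = ALlax q p f ((starRingEnd ℂ) z) (n₀ - n) *ᵥ Ψ (n₀ - n) :=
    hΨ (n₀ - n)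
  have h2 : (fun i => (starRingEnd ℂ) (Ψ (n₀ - n + 1) i))
      = (ALlax q p f ((starRingEnd ℂ) z) (n₀ - n)).map (starRingEnd ℂ)
          *ᵥ (fun i => (starRingEnd ℂ) (Ψ (n₀ - n) i)) := by
    funext i
    rw [h1]
    simp [Matrix.mulVec, Matrix.map_apply, dotProduct, Fin.sum_univ_two]
  have h3 : n₀ - (n + 1) + 1 = n₀ - n := by omega
  rw [h3, h2, Matrix.mulVec_mulVec, Matrix.mulVec_mulVec, key n]
end

section
/- Let ν ∈ {1, −1}, t₀ ∈ ℝ, q, p : ℤ × ℝ → ℂ with p(n,t) = ν·q(n, t₀ − t) (the time shifted nonlocal reduction), and let f : ℤ × ℝ → ℂ satisfy f(n,t)² = 1 − q(n,t)p(n,t), f(n,t) ≠ 0, and f(n, t₀ − t) = f(n,t) for all n, t. Then for every z ∈ ℂ \ {0}: σ_ν · L(n, t₀ − t, 1/z) = L(n, t, z) · σ_ν for all n ∈ ℤ and t ∈ ℝ. Consequently, if Ψ : ℤ → ℂ² satisfies Ψ(n+1) = L(n, t₀ − t, 1/z)·Ψ(n) for all n, then Φ(n) := σ_ν · Ψ(n)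 satisfies Φ(n+1) = L(n, t, z)·Φ(n) for all n. -/
/- STATEMENT 6: Symmetry of the Ablowitz–Ladik Lax matrix under the time
shifted nonlocal reduction `p(n,t) = ν·q(n, t₀ − t)`:
`σ_ν · L(n, t₀ − t, 1/z) = L(n, t, z) · σ_ν`, and the induced symmetry of
solutions of the discrete linear problem. -/

open Matrix

/-- The Ablowitz–Ladik Lax matrix
`L(n,t,z) = (1/f(n,t)) · [[z, q(n,t)], [p(n,t), z⁻¹]]`. -/
noncomputable def ALlaxT (q p f : ℤ × ℝ → ℂ) (t : ℝ) (z : ℂ) (n : ℤ) :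
    Matrix (Fin 2) (Fin 2) ℂ :=
  (f (n, t))⁻¹ • !![z, q (n, t); p (n, t), z⁻¹]

/-- The matrix `σ_ν = [[0,1],[ν,0]]`. -/
def sigmaNu (ν : ℂ) : Matrix (Fin 2) (Fin 2) ℂ := !![0, 1; ν, 0]

theorem al_time_shifted_reduction_symmetry (ν : ℂ) (hν : ν = 1 ∨ ν = -1) (t₀ : ℝ)
    (q p : ℤ × ℝ → ℂ) (hp : ∀ (n : ℤ) (t : ℝ), p (n, t) = ν * q (n, t₀ - t))
    (f : ℤ × ℝ → ℂ)
    (hf2 : ∀ (n : ℤ) (t : ℝ), (f (n, t))^2 = 1 - q (n, t) * p (n, t))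
    (hfne : ∀ (n : ℤ) (t : ℝ), f (n, t) ≠ 0)
    (hfsym : ∀ (n : ℤ) (t : ℝ), f (n, t₀ - t) = f (n, t))
    (z : ℂ) (hz : z ≠ 0) :
    (∀ (n : ℤ) (t : ℝ),
      sigmaNu ν * ALlaxT q p f (t₀ - t) z⁻¹ n = ALlaxT q p f t z n * sigmaNu ν) ∧
    (∀ (t : ℝ) (Ψ : ℤ → Fin 2 → ℂ),
      (∀ n : ℤ, Ψ (n + 1) = ALlaxT q p f (t₀ - t) z⁻¹ n *ᵥ Ψ n) →
      (∀ n : ℤ,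
        sigmaNu ν *ᵥ Ψ (n + 1) = ALlaxT q p f t z n *ᵥ (sigmaNu ν *ᵥ Ψ n))) := by
  have key : ∀ (n : ℤ) (t : ℝ),
      sigmaNu ν * ALlaxT q p f (t₀ - t) z⁻¹ n = ALlaxT q p f t z n * sigmaNu ν := by
    intro n t
    have hq : p (n, t₀ - t) = ν * q (n, t) := by
      rw [hp]; ring_nf
    unfold sigmaNu ALlaxT
    rw [hfsym, Matrix.mul_smul, Matrix.smul_mul]
    congr 1
    ext i j
    fin_cases i <;> fin_cases j <;>
      simp [Matrix.mul_apply, Fin.sum_univ_two, hq, hp n t] <;> ring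
  refine ⟨key, fun t Ψ hΨ n => ?_⟩
  rw [hΨ n, Matrix.mulVec_mulVec, Matrix.mulVec_mulVec, key]
end

section
/- Let ν ∈ {1, −1}, n₀ ∈ ℤ, t₀ ∈ ℝ, q, p : ℤ × ℝ → ℂ with p(n,t) = ν·q(n₀ − n, t₀ − t) (the space-time shifted nonlocal reduction), and let f : ℤ × ℝ → ℂ satisfy f(n,t)² = 1 − q(n,t)p(n,t), f(n,t) ≠ 0, and f(n₀ − n, t₀ − t) = f(n,t) for all n, t. Then for every z ∈ ℂ \ {0}: L(n, t, z) · σ̃_ν · L(n₀ − n, t₀ − t, z) = σ̃_ν for all n ∈ ℤ and t ∈ ℝ. Consequently, if Ψ : ℤ → ℂ² satisfies Ψ(n+1) = L(n, t₀ − t, z)·Ψ(n) for all n, then Φ(n) := σ̃_ν · Ψ(n₀ − n + 1) satisfies Φ(n+1) = L(n, t, z)·Φ(n) for all n. -/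
/- STATEMENT 7: Symmetry of the Ablowitz–Ladik Lax matrix under the space-time
shifted nonlocal reduction `p(n,t) = ν·q(n₀ − n, t₀ − t)`:
`L(n,t,z) · σ̃_ν · L(n₀ − n, t₀ − t, z) = σ̃_ν`, and the induced symmetry of
solutions of the discrete linear problem. -/

open Matrix

theorem al_spacetime_shifted_reduction_symmetry (ν : ℂ) (hν : ν = 1 ∨ ν = -1)
    (n₀ : ℤ) (t₀ : ℝ)
    (q p : ℤ × ℝ → ℂ) (hp : ∀ (n : ℤ) (t : ℝ), p (n, t) = ν * q (n₀ - n, t₀ - t))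
    (f : ℤ × ℝ → ℂ)
    (hf2 : ∀ (n : ℤ) (t : ℝ), (f (n, t))^2 = 1 - q (n, t) * p (n, t))
    (hfne : ∀ (n : ℤ) (t : ℝ), f (n, t) ≠ 0)
    (hfsym : ∀ (n : ℤ) (t : ℝ), f (n₀ - n, t₀ - t) = f (n, t))
    (z : ℂ) (hz : z ≠ 0) :
    (∀ (n : ℤ) (t : ℝ),
      ALlaxT q p f t z n * sigmaTildeNu ν * ALlaxT q p f (t₀ - t) z (n₀ - n)
        = sigmaTildeNu ν) ∧
    (∀ (t : ℝ) (Ψ : ℤ → Fin 2 → ℂ),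
      (∀ n : ℤ, Ψ (n + 1) = ALlaxT q p f (t₀ - t) z n *ᵥ Ψ n) →
      (∀ n : ℤ,
        sigmaTildeNu ν *ᵥ Ψ (n₀ - (n + 1) + 1)
          = ALlaxT q p f t z n *ᵥ (sigmaTildeNu ν *ᵥ Ψ (n₀ - n + 1)))) := by

  have hν2 : ν * ν = 1 := by rcases hν with h | h <;> simp [h]
  have part1 : ∀ (n : ℤ) (t : ℝ),
      ALlaxT q p f t z n * sigmaTildeNu ν * ALlaxT q p f (t₀ - t) z (n₀ - n)
        = sigmaTildeNu ν := by
    intro n t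
    have hp' : p (n₀ - n, t₀ - t) = ν * q (n, t) := by
      rw [hp]
      have h1 : n₀ - (n₀ - n) = n := by ring
      have h2 : t₀ - (t₀ - t) = t := by ring
      rw [h1, h2]
    have hff := hf2 n t
    rw [hp n t] at hff
    have hfe := hfne n t
    ext i j
    fin_cases i <;> fin_cases j <;>
      simp [ALlaxT, sigmaTildeNu, hfsym, hp n t, hp', Matrix.mul_apply,
        Fin.sum_univ_succ]
    · ring
    · field_simp
      linear_combination (-1 : ℂ) * hff
    · field_simp
      linear_combination ν * hff
    · ring
  refine ⟨part1, ?_⟩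
  intro t Ψ hΨ n
  have h1 : n₀ - (n + 1) + 1 = n₀ - n := by ring
  have h2 : n₀ - n + 1 = (n₀ - n) + 1 := by ring
  rw [h1, hΨ (n₀ - n), Matrix.mulVec_mulVec, Matrix.mulVec_mulVec, part1 n t]
end

section
/- Let h : ℂ → ℂ be continuous on the set {z : |z| ≥ 1}, holomorphic on {z : |z| > 1}, satisfy h(−z) = h(z) for all |z| ≥ 1, and h(z) → 0 as |z| → ∞. Then for every z ∈ ℂ with |z| > 1, (1/(2πi))·∮_{|ξ|=1} ξ·h(ξ)/(ξ² − z²) dξ = −h(z), and for every z with |z| < 1, (1/(2πi))·∮_{|ξ|=1} ξ·h(ξ)/(ξ² − z²) dξ = 0, where the contour integral is over the positively oriented unit circle. -/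
/- STATEMENT 10: Exterior dispersion-integral lemma. For `h` continuous on
`{|z| ≥ 1}`, holomorphic on `{|z| > 1}`, even, and vanishing at infinity:
`(1/(2πi))·∮_{|ξ|=1} ξ·h(ξ)/(ξ² − z²) dξ` equals `−h(z)` for `|z| > 1` and `0`
for `|z| < 1`. -/

open Complex

open Complex Metric Set Filter

lemma my_circle_integral_add {f g : ℂ → ℂ} {c : ℂ} {R : ℝ}
    (hf : CircleIntegrable f c R) (hg : CircleIntegrable g c R) :
    (∮ z in C(c, R), (f z + g z)) = (∮ z in C(c, R), f z) + ∮ z in C(c, R), g z := by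
  simp only [circleIntegral, smul_add, intervalIntegral.integral_add hf.out hg.out]

lemma sphere_sub {r : ℝ} (hr : 1 ≤ r) : Metric.sphere (0:ℂ) r ⊆ {z : ℂ | 1 ≤ ‖z‖} := by
  intro ξ hξ
  have : ‖ξ‖ = r := by simpa [Complex.dist_eq] using hξ
  simpa [this] using hr

lemma abs_of_sphere {r : ℝ} {ξ : ℂ} (hξ : ξ ∈ Metric.sphere (0:ℂ) r) : ‖ξ‖ = r := by
  simpa [Complex.dist_eq] using hξ

/-- Cauchy integral formula in an annulus `1 ≤ |ξ| ≤ R` for a point `1 < |w| < R`. -/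
lemma annulus_cauchy {R : ℝ} {w : ℂ} (hw1 : 1 < ‖w‖) (hwR : ‖w‖ < R)
    {f : ℂ → ℂ} (hc : ContinuousOn f {z : ℂ | 1 ≤ ‖z‖})
    (hd : DifferentiableOn ℂ f {z : ℂ | 1 < ‖z‖}) :
    (∮ z in C(0, R), (z - w)⁻¹ * f z) - (∮ z in C(0, 1), (z - w)⁻¹ * f z)
      = 2 * Real.pi * Complex.I * f w := by
  have hR1 : (1:ℝ) < R := lt_trans hw1 hwR
  have hopen : IsOpen {z : ℂ | 1 < ‖z‖} :=
    isOpen_lt continuous_const continuous_norm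
  have hdiff : ∀ z : ℂ, 1 < ‖z‖ → DifferentiableAt ℂ f z := fun z hz =>
    (hd z hz).differentiableAt (hopen.mem_nhds hz)
  have hsubA : closedBall (0:ℂ) R \ ball 0 1 ⊆ {z : ℂ | 1 ≤ ‖z‖} := by
    intro z hz
    have := hz.2
    simp only [Metric.mem_ball, Complex.dist_eq, sub_zero, not_lt] at this
    exact this
  have hw_open : w ∈ ball (0:ℂ) R \ closedBall 0 1 := by
    constructor
    · simpa [Complex.dist_eq] using hwR
    · simp only [Metric.mem_closedBall, Complex.dist_eq, sub_zero, not_le]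
      exact hw1
  have hopen_ann : IsOpen (ball (0:ℂ) R \ closedBall 0 1) :=
    isOpen_ball.sdiff isClosed_closedBall
  have hnhds : closedBall (0:ℂ) R \ ball 0 1 ∈ nhds w :=
    Filter.mem_of_superset (hopen_ann.mem_nhds hw_open)
      (Set.diff_subset_diff ball_subset_closedBall ball_subset_closedBall)
  set F : ℂ → ℂ := dslope f w with hF
  have hcF : ContinuousOn F (closedBall (0:ℂ) R \ ball 0 1) :=
    (continuousOn_dslope hnhds).2 ⟨hc.mono hsubA, hdiff w hw1⟩
  have hdF : ∀ z ∈ (ball (0:ℂ) R \ closedBall 0 1) \ {w}, DifferentiableAt ℂ F z := by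
    intro z hz
    have hzw : z ≠ w := by simpa using hz.2
    have h1z : 1 < ‖z‖ := by
      have := hz.1.2
      simp only [Metric.mem_closedBall, Complex.dist_eq, sub_zero, not_le] at this
      exact this
    exact (differentiableAt_dslope_of_ne hzw).2 (hdiff z h1z)
  have key : (∮ z in C(0, R), F z) = ∮ z in C(0, 1), F z :=
    Complex.circleIntegral_eq_of_differentiable_on_annulus_off_countable zero_lt_one hR1.le
      (Set.countable_singleton w) hcF hdF
  -- rewrite both integrals of F
  have hFeq : ∀ z : ℂ, z ≠ w → F z = (z - w)⁻¹ * f z - (z - w)⁻¹ * f w := by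
    intro z hz
    rw [hF, dslope_of_ne f hz, slope_def_field, sub_div, div_eq_inv_mul, div_eq_inv_mul]
  have hint : ∀ r : ℝ, 1 ≤ r → r ≠ ‖w‖ →
      (∮ z in C(0, r), F z) = (∮ z in C(0, r), (z - w)⁻¹ * f z)
        - (∮ z in C(0, r), (z - w)⁻¹) * f w := by
    intro r hr hrw
    have hne : ∀ z ∈ Metric.sphere (0:ℂ) r, z ≠ w := by
      intro z hz hzw
      exact hrw (by rw [← abs_of_sphere hz, hzw])
    have hinv : ContinuousOn (fun z : ℂ => (z - w)⁻¹) (Metric.sphere (0:ℂ) r) :=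
      (continuousOn_id.sub continuousOn_const).inv₀ fun z hz => sub_ne_zero.2 (hne z hz)
    have hI1 : CircleIntegrable (fun z : ℂ => (z - w)⁻¹ * f z) 0 r :=
      (hinv.mul (hc.mono (sphere_sub hr))).circleIntegrable (by linarith)
    have hI2 : CircleIntegrable (fun z : ℂ => (z - w)⁻¹ * f w) 0 r :=
      (hinv.mul continuousOn_const).circleIntegrable (by linarith)
    calc (∮ z in C(0, r), F z)
        = ∮ z in C(0, r), ((z - w)⁻¹ * f z - (z - w)⁻¹ * f w) :=
          circleIntegral.integral_congr (by linarith) fun z hz => hFeq z (hne z hz)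
      _ = (∮ z in C(0, r), (z - w)⁻¹ * f z) - ∮ z in C(0, r), (z - w)⁻¹ * f w :=
          circleIntegral.integral_sub hI1 hI2
      _ = (∮ z in C(0, r), (z - w)⁻¹ * f z) - (∮ z in C(0, r), (z - w)⁻¹) * f w := by
          congr 1
          simpa [smul_eq_mul] using
            circleIntegral.integral_smul_const (fun z : ℂ => (z - w)⁻¹) (f w) 0 r
  have hkR : (∮ z in C(0, R), (z - w)⁻¹) = 2 * Real.pi * Complex.I :=
    circleIntegral.integral_sub_inv_of_mem_ball (by simpa [Complex.dist_eq] using hwR)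
  have hk1 : (∮ z in C(0, 1), (z - w)⁻¹) = 0 := by
    apply Complex.circleIntegral_eq_zero_of_differentiable_on_off_countable zero_le_one
      (Set.countable_empty) (f := fun z : ℂ => (z - w)⁻¹)
    · apply (continuousOn_id.sub continuousOn_const).inv₀
      intro z hz
      refine sub_ne_zero.2 fun hzw => ?_
      simp only [id_eq] at hzw
      have : ‖z‖ ≤ 1 := by simpa [Complex.dist_eq] using hz
      rw [hzw] at this; linarith
    · intro z hz
      have : ‖z‖ < 1 := by simpa [Complex.dist_eq] using hz.1
      refine (differentiableAt_id.sub_const w).inv (sub_ne_zero.2 fun hzw => ?_)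
      simp only [id_eq] at hzw
      rw [hzw] at this; linarith
  have e1 := hint R hR1.le (by linarith)
  have e2 := hint 1 le_rfl (by linarith)
  rw [e1, e2, hkR, hk1] at key
  linear_combination key

/-- The circle integral over radius `R` tends to `0` as `R → ∞`. -/
lemma tail_tendsto (h : ℂ → ℂ)
    (hlim : Filter.Tendsto h (Filter.comap (fun z : ℂ => ‖z‖) Filter.atTop)
      (nhds 0)) (z : ℂ) :
    Filter.Tendsto (fun R : ℝ => ∮ ξ in C(0, R), ξ * h ξ / (ξ^2 - z^2))
      Filter.atTop (nhds 0) := by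
  rw [NormedAddCommGroup.tendsto_nhds_zero]
  intro ε hε
  set ε' : ℝ := ε / (4 * Real.pi) with hε'def
  have hπ := Real.pi_pos
  have hε' : 0 < ε' := by positivity
  have hev : ∀ᶠ w in Filter.comap (fun z : ℂ => ‖z‖) Filter.atTop,
      ‖h w‖ < ε' := by
    have := Metric.tendsto_nhds.mp hlim ε' hε'
    simpa [dist_zero_right] using this
  rw [Filter.eventually_comap] at hev
  obtain ⟨M, hM⟩ := Filter.eventually_atTop.1 hev
  filter_upwards [Filter.eventually_ge_atTop (max M (2 * ‖z‖ + 2))] with R hR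
  have hRM : M ≤ R := le_trans (le_max_left _ _) hR
  have hRz : 2 * ‖z‖ + 2 ≤ R := le_trans (le_max_right _ _) hR
  have habsz : 0 ≤ ‖z‖ := norm_nonneg z
  have hR2 : (2:ℝ) ≤ R := by linarith
  have hR0 : (0:ℝ) < R := by linarith
  have hzR : ‖z‖ ≤ R / 2 := by linarith
  have hbound : ∀ ξ ∈ Metric.sphere (0:ℂ) R,
      ‖ξ * h ξ / (ξ^2 - z^2)‖ ≤ R * ε' / (3 / 4 * R ^ 2) := by
    intro ξ hξ
    have haξ : ‖ξ‖ = R := abs_of_sphere hξ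
    have hhξ : ‖h ξ‖ ≤ ε' := (hM (‖ξ‖) (by rw [haξ]; exact hRM) ξ rfl).le
    have hden : 3 / 4 * R ^ 2 ≤ ‖ξ^2 - z^2‖ := by
      have h1 : ‖(ξ:ℂ)^2‖ - ‖(z:ℂ)^2‖ ≤ ‖ξ^2 - z^2‖ := norm_sub_norm_le _ _
      have h2 : ‖(ξ:ℂ)^2‖ = R ^ 2 := by
        rw [norm_pow, haξ]
      have h3 : ‖(z:ℂ)^2‖ ≤ (R / 2) ^ 2 := by
        rw [norm_pow]
        exact pow_le_pow_left₀ habsz hzR 2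
      nlinarith
    have hnum : ‖ξ * h ξ‖ ≤ R * ε' := by
      rw [norm_mul, haξ]
      exact mul_le_mul_of_nonneg_left hhξ hR0.le
    rw [norm_div]
    exact div_le_div₀ (by positivity) hnum (by positivity) hden
  have := circleIntegral.norm_integral_le_of_norm_le_const hR0.le hbound
  refine lt_of_le_of_lt this ?_
  have : 2 * Real.pi * R * (R * ε' / (3 / 4 * R ^ 2)) = 8 / 3 * Real.pi * ε' := by
    field_simp
    ring
  rw [this, hε'def]
  have h23 : 8 / 3 * Real.pi * (ε / (4 * Real.pi)) = 2 / 3 * ε := by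
    field_simp; ring
  rw [h23]; linarith


theorem exterior_dispersion_integral (h : ℂ → ℂ)
    (hcont : ContinuousOn h {z : ℂ | 1 ≤ ‖z‖})
    (hholo : DifferentiableOn ℂ h {z : ℂ | 1 < ‖z‖})
    (heven : ∀ z : ℂ, 1 ≤ ‖z‖ → h (-z) = h z)
    (hlim : Filter.Tendsto h (Filter.comap (fun z : ℂ => ‖z‖) Filter.atTop)
      (nhds 0)) :
    (∀ z : ℂ, 1 < ‖z‖ →
      (1 / (2 * Real.pi * Complex.I)) * (∮ ξ in C(0, 1), ξ * h ξ / (ξ^2 - z^2))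
        = -h z) ∧
    (∀ z : ℂ, ‖z‖ < 1 →
      (1 / (2 * Real.pi * Complex.I)) * (∮ ξ in C(0, 1), ξ * h ξ / (ξ^2 - z^2))
        = 0) := by
  have hopen : IsOpen {z : ℂ | 1 < ‖z‖} :=
    isOpen_lt continuous_const continuous_norm
  have hdiff : ∀ z : ℂ, 1 < ‖z‖ → DifferentiableAt ℂ h z := fun z hz =>
    (hholo z hz).differentiableAt (hopen.mem_nhds hz)
  have h2πI : (2 * (Real.pi : ℂ) * Complex.I) ≠ 0 := by
    simp [Real.pi_ne_zero, Complex.I_ne_zero]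
  constructor
  · -- |z| > 1
    intro z hz
    set G : ℝ → ℂ := fun r => ∮ ξ in C(0, r), ξ * h ξ / (ξ^2 - z^2) with hG
    set A : ℝ → ℂ := fun r => ∮ ξ in C(0, r), (ξ - z)⁻¹ * h ξ with hA
    set B : ℝ → ℂ := fun r => ∮ ξ in C(0, r), (ξ + z)⁻¹ * h ξ with hB
    have habsz : 0 < ‖z‖ := lt_trans one_pos hz
    have hsplit : ∀ r : ℝ, 1 ≤ r → r ≠ ‖z‖ →
        G r = 2⁻¹ * A r + 2⁻¹ * B r := by
      intro r hr hrz
      have hr0 : (0:ℝ) ≤ r := by linarith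
      have hne1 : ∀ ξ ∈ Metric.sphere (0:ℂ) r, ξ - z ≠ 0 := by
        intro ξ hξ
        refine sub_ne_zero.2 fun hξz => hrz ?_
        rw [← abs_of_sphere hξ, hξz]
      have hne2 : ∀ ξ ∈ Metric.sphere (0:ℂ) r, ξ + z ≠ 0 := by
        intro ξ hξ hξz
        have : ξ = -z := by linear_combination hξz
        exact hrz (by rw [← abs_of_sphere hξ, this, norm_neg])
      have heq : Set.EqOn (fun ξ : ℂ => ξ * h ξ / (ξ^2 - z^2))
          (fun ξ : ℂ => 2⁻¹ * ((ξ - z)⁻¹ * h ξ) + 2⁻¹ * ((ξ + z)⁻¹ * h ξ))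
          (Metric.sphere (0:ℂ) r) := by
        intro ξ hξ
        have h1 := hne1 ξ hξ
        have h2 := hne2 ξ hξ
        have hd2 : ξ^2 - z^2 ≠ 0 := by
          rw [sq_sub_sq]; exact mul_ne_zero h2 h1
        field_simp
        ring
      have hcs : ContinuousOn h (Metric.sphere (0:ℂ) r) := hcont.mono (sphere_sub hr)
      have hIA : CircleIntegrable (fun ξ : ℂ => 2⁻¹ * ((ξ - z)⁻¹ * h ξ)) 0 r := by
        refine (continuousOn_const.mul (ContinuousOn.mul ?_ hcs)).circleIntegrable hr0
        exact (continuousOn_id.sub continuousOn_const).inv₀ hne1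
      have hIB : CircleIntegrable (fun ξ : ℂ => 2⁻¹ * ((ξ + z)⁻¹ * h ξ)) 0 r := by
        refine (continuousOn_const.mul (ContinuousOn.mul ?_ hcs)).circleIntegrable hr0
        exact (continuousOn_id.add continuousOn_const).inv₀ hne2
      calc G r = ∮ ξ in C(0, r), (2⁻¹ * ((ξ - z)⁻¹ * h ξ) + 2⁻¹ * ((ξ + z)⁻¹ * h ξ)) :=
            circleIntegral.integral_congr hr0 heq
        _ = (∮ ξ in C(0, r), 2⁻¹ * ((ξ - z)⁻¹ * h ξ))
              + ∮ ξ in C(0, r), 2⁻¹ * ((ξ + z)⁻¹ * h ξ) :=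
            my_circle_integral_add hIA hIB
        _ = 2⁻¹ * A r + 2⁻¹ * B r := by
            rw [circleIntegral.integral_const_mul, circleIntegral.integral_const_mul]
    have hconst : ∀ᶠ R in Filter.atTop,
        G R = G 1 + 2 * Real.pi * Complex.I * h z := by
      filter_upwards [Filter.eventually_ge_atTop (‖z‖ + 1)] with R hR
      have hzR : ‖z‖ < R := by linarith
      have h1R : (1:ℝ) ≤ R := by linarith
      have hAz : A R - A 1 = 2 * Real.pi * Complex.I * h z :=
        annulus_cauchy hz hzR hcont hholo
      have hBz : B R - B 1 = 2 * Real.pi * Complex.I * h z := by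
        have hz' : 1 < ‖(-z)‖ := by rwa [norm_neg]
        have hzR' : ‖(-z)‖ < R := by rwa [norm_neg]
        have := annulus_cauchy hz' hzR' hcont hholo
        simp only [sub_neg_eq_add] at this
        rw [heven z hz.le] at this
        exact this
      have e1 := hsplit R h1R (by linarith)
      have e2 := hsplit 1 le_rfl (by linarith)
      rw [e1, e2]
      linear_combination 2⁻¹ * hAz + 2⁻¹ * hBz
    have htail := tail_tendsto h hlim z
    have huniq : G 1 + 2 * Real.pi * Complex.I * h z = 0 := by
      have h1 : Filter.Tendsto G Filter.atTop
          (nhds (G 1 + 2 * Real.pi * Complex.I * h z)) :=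
        Filter.Tendsto.congr' (Filter.EventuallyEq.symm hconst) tendsto_const_nhds
      exact tendsto_nhds_unique h1 htail
    have hG1 : G 1 = -(2 * Real.pi * Complex.I * h z) := by linear_combination huniq
    show (1 / (2 * Real.pi * Complex.I)) * G 1 = -h z
    rw [hG1]
    field_simp
  · -- |z| < 1
    intro z hz
    set G : ℝ → ℂ := fun r => ∮ ξ in C(0, r), ξ * h ξ / (ξ^2 - z^2) with hG
    have habsz : 0 ≤ ‖z‖ := norm_nonneg z
    have hdne : ∀ ξ : ℂ, 1 ≤ ‖ξ‖ → ξ^2 - z^2 ≠ 0 := by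
      intro ξ hξ hc
      have : ‖ξ^2‖ = ‖z^2‖ := by
        rw [sub_eq_zero] at hc; rw [hc]
      rw [norm_pow, norm_pow] at this
      nlinarith
    have hconst : ∀ᶠ R in Filter.atTop, G R = G 1 := by
      filter_upwards [Filter.eventually_ge_atTop 1] with R hR
      refine Complex.circleIntegral_eq_of_differentiable_on_annulus_off_countable
        zero_lt_one hR Set.countable_empty ?_ ?_
      · have hsub : Metric.closedBall (0:ℂ) R \ Metric.ball 0 1 ⊆ {w : ℂ | 1 ≤ ‖w‖} := by
          intro w hw
          have := hw.2
          simp only [Metric.mem_ball, Complex.dist_eq, sub_zero, not_lt] at this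
          exact this
        refine ContinuousOn.mono ?_ hsub
        exact (continuousOn_id.mul hcont).div
          ((continuousOn_id.pow 2).sub continuousOn_const) fun ξ hξ => hdne ξ hξ
      · intro ξ hξ
        have h1ξ : 1 < ‖ξ‖ := by
          have := hξ.1.2
          simp only [Metric.mem_closedBall, Complex.dist_eq, sub_zero, not_le] at this
          exact this
        exact (differentiableAt_id.mul (hdiff ξ h1ξ)).div
          ((differentiableAt_id.pow 2).sub_const _) (hdne ξ h1ξ.le)
    have htail := tail_tendsto h hlim z
    have huniq : G 1 = 0 := by
      have h1 : Filter.Tendsto G Filter.atTop (nhds (G 1)) :=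
        Filter.Tendsto.congr' (Filter.EventuallyEq.symm hconst) tendsto_const_nhds
      exact tendsto_nhds_unique h1 htail
    show (1 / (2 * Real.pi * Complex.I)) * G 1 = 0
    rw [huniq, mul_zero]
end

section
/- Let A be a commutative ring that is also an algebra over ℂ, and let b : A → A → A satisfy the Leibniz rule in its first argument: b(x·y, w) = x·b(y, w) + y·b(x, w) for all x, y, w ∈ A. Suppose z ∈ A is invertible, γ ∈ A, b(z, γ) = (i/2)·z·γ, and b(z⁻¹, γ) = 0. Then γ = 0. (Consequently, the time shifted nonlocal reduction of the Ablowitz–Ladik system, which forces z̃_j = 1/z_j and hence {z̃_j, γ_j} = 0, is incompatible with the Poisson bracket relation {z_j, γ_j} = (i/2)·z_j·γ_j of the scattering data whenever the discrete spectrum is nonempty, i.e. γ_j ≠ 0.) -/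
/- STATEMENT 13: Incompatibility of the time shifted nonlocal reduction with
the Poisson bracket relations of the Ablowitz–Ladik scattering data: if a
bracket `b` satisfies the Leibniz rule in its first argument,
`b(z, γ) = (i/2)·z·γ`, `z` is invertible and `b(z⁻¹, γ) = 0`, then `γ = 0`. -/

theorem time_shifted_reduction_incompatible
    (A : Type*) [CommRing A] [Algebra ℂ A]
    (b : A → A → A)
    (hLeib : ∀ x y w : A, b (x * y) w = x * b y w + y * b x w)
    (z zinv γ : A) (hzinv : z * zinv = 1)
    (h1 : b z γ = (Complex.I / 2) • (z * γ))
    (h2 : b zinv γ = 0) :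
    γ = 0 := by
  have hone : b 1 γ = 0 := by
    have := hLeib 1 1 γ
    simp at this
    exact this
  have key : (Complex.I / 2) • γ = 0 := by
    have h := hLeib z zinv γ
    rw [hzinv, hone, h2, h1, mul_zero, zero_add, mul_smul_comm] at h
    have : zinv * (z * γ) = γ := by
      calc zinv * (z * γ) = (z * zinv) * γ := by ring
        _ = γ := by rw [hzinv, one_mul]
    rw [this] at h
    exact h.symm
  have h3 : ((2 : ℂ) / Complex.I) • ((Complex.I / 2) • γ) = γ := by
    rw [smul_smul, div_mul_div_comm, mul_comm, div_self (by simp [Complex.I_ne_zero]), one_smul]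
  rw [key, smul_zero] at h3
  exact h3.symm
end
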